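/- arXiv:2306.04651 — 11 statements merged into one kernel-verified Lean document; each statement's English description precedes it below -/
import Mathlib

section
/- If S(A,b) is nonempty and there exists an index i such that ∑_j a_{ij} = b_i and a_{ij} ≠ 0 for every j, then (1,1,...,1) is the unique solution of the system, i.e., S(A,b) = {(1,...,1)}. -/
open Finset

noncomputable section

/-- Łukasiewicz t-norm. -/
def TL (a x : ℝ) : ℝ := max (a + x - 1) 0

/-- Solution set of the addition-Łukasiewicz system. -/
def Sset {m n : ℕ} (A : Fin m → Fin n → ℝ) (b : Fin m → ℝ) : Set (Fin n → ℝ) :=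
  {x | (∀ j, x j ∈ Set.Icc (0:ℝ) 1) ∧ ∀ i, b i ≤ ∑ j, TL (A i j) (x j)}

/-- Minimal solution. -/
def IsMinimalSol {m n : ℕ} (A : Fin m → Fin n → ℝ) (b : Fin m → ℝ) (x : Fin n → ℝ) : Prop :=
  x ∈ Sset A b ∧ ∀ y ∈ Sset A b, y ≤ x → y = x

/-- The set F_j(z). -/
def Fset {m n : ℕ} (A : Fin m → Fin n → ℝ) (b : Fin m → ℝ) (j : Fin n) (z : Fin n → ℝ) :
    Set ℝ :=
  {t | t ∈ Set.Icc (0:ℝ) 1 ∧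
    ∀ i, b i ≤ TL (A i j) t + ∑ k ∈ Finset.univ.erase j, TL (A i k) (z k)}

/-- Objective Z(x) = max_j x_j. -/
def Zf {n : ℕ} (x : Fin n → ℝ) : ℝ := ⨆ j, x j

/-- Optimal solution of the minimax problem. -/
def IsOptimal {m n : ℕ} (A : Fin m → Fin n → ℝ) (b : Fin m → ℝ) (x : Fin n → ℝ) : Prop :=
  x ∈ Sset A b ∧ ∀ y ∈ Sset A b, Zf x ≤ Zf y

theorem stmt4 {m n : ℕ} (A : Fin m → Fin n → ℝ) (b : Fin m → ℝ)
    (hA : ∀ i j, A i j ∈ Set.Icc (0:ℝ) 1) (hb : ∀ i, 0 < b i)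
    (hS : (Sset A b).Nonempty)
    (i : Fin m) (hsum : ∑ j, A i j = b i) (hnz : ∀ j, A i j ≠ 0) :
    Sset A b = {fun _ : Fin n => (1:ℝ)} := by
  have key : ∀ x ∈ Sset A b, x = fun _ : Fin n => (1:ℝ) := by
    intro x hx
    obtain ⟨hx01, hxi⟩ := hx
    have hle : ∀ j ∈ Finset.univ, TL (A i j) (x j) ≤ A i j := by
      intro j _
      have h1 : x j ≤ 1 := (hx01 j).2
      have h0 : 0 ≤ A i j := (hA i j).1
      simp only [TL]
      exact max_le (by linarith) h0
    have hsum2 : ∑ j, TL (A i j) (x j) ≤ ∑ j, A i j := Finset.sum_le_sum hle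
    have heq : ∑ j, TL (A i j) (x j) = ∑ j, A i j := le_antisymm hsum2 (hsum ▸ hxi i)
    have hterm : ∀ j ∈ Finset.univ, TL (A i j) (x j) = A i j :=
      (Finset.sum_eq_sum_iff_of_le hle).mp heq
    funext j
    have h := hterm j (Finset.mem_univ j)
    have h0 : 0 < A i j := lt_of_le_of_ne (hA i j).1 (Ne.symm (hnz j))
    simp only [TL] at h
    rcases le_or_gt (A i j + x j - 1) 0 with hc | hc
    · rw [max_eq_right hc] at h; exact absurd h.symm (hnz j)
    · rw [max_eq_left hc.le] at h; linarith
  ext x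
  constructor
  · intro hx; exact key x hx
  · intro hx
    obtain ⟨y, hy⟩ := hS
    rw [Set.mem_singleton_iff] at hx
    rw [hx, ← key y hy]; exact hy
end
end

section
/- Suppose S(A,b) ≠ ∅. Fix j and define y by y_j = max over i of max(0, 1 + b_i − ∑_t a_{it}) and y_k = 1 for k ≠ j. Then y ∈ S(A,b). Moreover, if a_{it} > 0 for all i, t and a_{ij} + y_j − 1 > 0 for all i, then y is a minimal solution of the system. -/
open Finset

noncomputable section

theorem stmt7 {m n : ℕ} (hm : 0 < m) (A : Fin m → Fin n → ℝ) (b : Fin m → ℝ)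
    (hA : ∀ i j, A i j ∈ Set.Icc (0:ℝ) 1) (hb : ∀ i, 0 < b i)
    (hS : (Sset A b).Nonempty) (j : Fin n) (y : Fin n → ℝ)
    (hyj : y j = Finset.univ.sup'
      (Finset.univ_nonempty_iff.mpr (Fin.pos_iff_nonempty.mp hm))
      (fun i => max 0 (1 + b i - ∑ t, A i t)))
    (hyk : ∀ k, k ≠ j → y k = 1) :
    y ∈ Sset A b ∧
      ((∀ i t, 0 < A i t) → (∀ i, 0 < A i j + y j - 1) → IsMinimalSol A b y) := by
  have hne : (Finset.univ : Finset (Fin m)).Nonempty :=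
    Finset.univ_nonempty_iff.mpr (Fin.pos_iff_nonempty.mp hm)
  obtain ⟨x, hx01, hxsol⟩ := hS
  have hAle : ∀ i k, TL (A i k) (x k) ≤ A i k := by
    intro i k
    unfold TL
    exact max_le (by linarith [(hx01 k).2]) (hA i k).1
  have hbA : ∀ i, b i ≤ ∑ t, A i t := fun i =>
    (hxsol i).trans (Finset.sum_le_sum fun k _ => hAle i k)
  have hyj0 : 0 ≤ y j := by
    rw [hyj]
    exact le_trans (le_max_left 0 _) (Finset.le_sup' (fun i => max 0 (1 + b i - ∑ t, A i t)) (Finset.mem_univ (⟨0, hm⟩ : Fin m)))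
  have hyj1 : y j ≤ 1 := by
    rw [hyj]
    apply Finset.sup'_le
    intro i _
    exact max_le (by norm_num) (by linarith [hbA i])
  have hy01 : ∀ k, y k ∈ Set.Icc (0:ℝ) 1 := by
    intro k
    by_cases hk : k = j
    · subst hk; exact ⟨hyj0, hyj1⟩
    · rw [hyk k hk]; exact ⟨by norm_num, le_refl 1⟩
  -- key: value of TL on erased coordinates
  have hTLerase : ∀ i, ∀ k ∈ Finset.univ.erase j, TL (A i k) (y k) = A i k := by
    intro i k hk
    have hkj : k ≠ j := (Finset.mem_erase.mp hk).1
    rw [hyk k hkj]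
    unfold TL
    rw [show A i k + 1 - 1 = A i k by ring]
    exact max_eq_left (hA i k).1
  have hsplit : ∀ i, ∑ k, TL (A i k) (y k)
      = TL (A i j) (y j) + ∑ k ∈ Finset.univ.erase j, A i k := by
    intro i
    rw [← Finset.add_sum_erase _ _ (Finset.mem_univ j)]
    congr 1
    exact Finset.sum_congr rfl (hTLerase i)
  have hAsplit : ∀ i, ∑ t, A i t = A i j + ∑ k ∈ Finset.univ.erase j, A i k := by
    intro i
    rw [← Finset.add_sum_erase _ _ (Finset.mem_univ j)]
  have hmem : y ∈ Sset A b := by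
    refine ⟨hy01, ?_⟩
    intro i
    rw [hsplit i]
    have h1 : max 0 (1 + b i - ∑ t, A i t) ≤ y j := by
      rw [hyj]; exact Finset.le_sup' (fun i => max 0 (1 + b i - ∑ t, A i t)) (Finset.mem_univ i)
    have h2 : 1 + b i - ∑ t, A i t ≤ y j := le_trans (le_max_right _ _) h1
    have h3 : A i j + y j - 1 ≤ TL (A i j) (y j) := le_max_left _ _
    have := hAsplit i
    linarith
  refine ⟨hmem, ?_⟩
  intro h1 h2
  refine ⟨hmem, ?_⟩
  intro z hz hzy
  by_contra hzne
  have hyjpos : 0 < y j := by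
    have := h2 ⟨0, hm⟩
    have := (hA ⟨0, hm⟩ j).2
    linarith
  obtain ⟨i0, _, hi0⟩ := Finset.exists_mem_eq_sup' hne
    (fun i => max 0 (1 + b i - ∑ t, A i t))
  have hyjval : y j = 1 + b i0 - ∑ t, A i0 t := by
    rw [hyj, hi0]
    rcases max_cases (0:ℝ) (1 + b i0 - ∑ t, A i0 t) with ⟨h, _⟩ | ⟨h, _⟩
    · exfalso
      rw [hyj, hi0] at hyjpos
      simp only [h] at hyjpos
      exact lt_irrefl 0 hyjpos
    · exact h
  -- sum at y for i0 equals b i0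
  have hTLj : TL (A i0 j) (y j) = A i0 j + y j - 1 := by
    unfold TL
    exact max_eq_left (le_of_lt (h2 i0))
  have hsum_eq : ∑ k, TL (A i0 k) (y k) = b i0 := by
    rw [hsplit i0, hTLj]
    have := hAsplit i0
    linarith [hyjval]
  -- a strict coordinate
  obtain ⟨k0, hk0⟩ : ∃ k, z k ≠ y k := Function.ne_iff.mp hzne
  have hk0lt : z k0 < y k0 := lt_of_le_of_ne (hzy k0) hk0
  -- strict inequality for k0
  have hTLypos : ∀ k, TL (A i0 k) (y k) = A i0 k + y k - 1 ∧ 0 < A i0 k + y k - 1 := by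
    intro k
    by_cases hk : k = j
    · subst hk; exact ⟨hTLj, h2 i0⟩
    · rw [hyk k hk]
      constructor
      · unfold TL
        exact max_eq_left (by linarith [(h1 i0 k)])
      · linarith [h1 i0 k]
  have hmono : ∀ k ∈ Finset.univ, TL (A i0 k) (z k) ≤ TL (A i0 k) (y k) := by
    intro k _
    unfold TL
    exact max_le_max (by linarith [hzy k]) (le_refl 0)
  have hstrict : TL (A i0 k0) (z k0) < TL (A i0 k0) (y k0) := by
    obtain ⟨heq, hpos⟩ := hTLypos k0
    rw [heq]
    unfold TL
    exact max_lt (by linarith) hpos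
  have hlt : ∑ k, TL (A i0 k) (z k) < ∑ k, TL (A i0 k) (y k) :=
    Finset.sum_lt_sum hmono ⟨k0, Finset.mem_univ k0, hstrict⟩
  have := hz.2 i0
  rw [hsum_eq] at hlt
  linarith

end
end

section
/- If S(A,b) ≠ ∅, then for each j the set of j-th coordinates of solutions equals F_j(1̂), i.e., {x_j : x ∈ S(A,b)} = {t ∈ [0,1] : for all i, T_L(a_{ij}, t) + ∑_{k ≠ j} a_{ik} ≥ b_i}. -/
open Finset

noncomputable section

theorem stmt9 {m n : ℕ} (A : Fin m → Fin n → ℝ) (b : Fin m → ℝ)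
    (hA : ∀ i j, A i j ∈ Set.Icc (0:ℝ) 1) (hb : ∀ i, 0 < b i)
    (hS : (Sset A b).Nonempty) (j : Fin n) :
    (fun x : Fin n → ℝ => x j) '' Sset A b = Fset A b j (fun _ => (1:ℝ)) := by

  have hTLmono : ∀ a x y : ℝ, x ≤ y → TL a x ≤ TL a y := by
    intro a x y h
    unfold TL
    exact max_le_max (by linarith) le_rfl
  ext t
  constructor
  · rintro ⟨x, ⟨hx01, hxi⟩, rfl⟩
    refine ⟨hx01 j, fun i => ?_⟩
    have h1 : ∑ k, TL (A i k) (x k) ≤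
        TL (A i j) (x j) + ∑ k ∈ Finset.univ.erase j, TL (A i k) (1:ℝ) := by
      rw [← Finset.add_sum_erase _ _ (Finset.mem_univ j)]
      gcongr with k hk
      exact hTLmono _ _ _ (hx01 k).2
    exact le_trans (hxi i) h1
  · rintro ⟨ht01, hti⟩
    refine ⟨Function.update (fun _ => (1:ℝ)) j t, ⟨fun k => ?_, fun i => ?_⟩, ?_⟩
    · by_cases hk : k = j
      · subst hk; simpa using ht01
      · simp [Function.update_of_ne hk]
    · rw [← Finset.add_sum_erase _ _ (Finset.mem_univ j), Function.update_self]
      refine le_trans (hti i) ?_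
      gcongr with k hk
      rw [Function.update_of_ne (Finset.ne_of_mem_erase hk)]
    · simp
end
end

section
/- The system has a unique minimal solution if and only if the vector (δ_1(1̂), ..., δ_n(1̂)) belongs to S(A,b), where δ_j(1̂) is the minimum of F_j(1̂); in that case this vector is the unique minimal solution. -/
open Finset

noncomputable section

/-! Auxiliary lemmas -/

lemma TL_mono (a : ℝ) {x y : ℝ} (h : x ≤ y) : TL a x ≤ TL a y :=
  max_le_max (by linarith) le_rfl

lemma sum_split {n : ℕ} (f : Fin n → ℝ) (j : Fin n) :
    ∑ k, f k = f j + ∑ k ∈ Finset.univ.erase j, f k :=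
  (Finset.add_sum_erase _ _ (Finset.mem_univ j)).symm

lemma update_mem_Sset {m n : ℕ} {A : Fin m → Fin n → ℝ} {b : Fin m → ℝ}
    {x : Fin n → ℝ} (hI : ∀ k, x k ∈ Set.Icc (0:ℝ) 1) {j : Fin n} {t : ℝ}
    (ht : t ∈ Fset A b j x) : Function.update x j t ∈ Sset A b := by
  obtain ⟨htI, hti⟩ := ht
  constructor
  · intro k
    by_cases hk : k = j
    · subst hk; simpa using htI
    · rw [Function.update_of_ne hk]; exact hI k
  · intro i
    rw [sum_split (fun k => TL (A i k) (Function.update x j t k)) j,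
      Function.update_self]
    have he : ∑ k ∈ Finset.univ.erase j, TL (A i k) (Function.update x j t k)
        = ∑ k ∈ Finset.univ.erase j, TL (A i k) (x k) := by
      refine Finset.sum_congr rfl fun k hk => ?_
      rw [Function.update_of_ne (Finset.ne_of_mem_erase hk)]
    rw [he]; exact hti i

lemma mem_Fset_of {m n : ℕ} {A : Fin m → Fin n → ℝ} {b : Fin m → ℝ}
    {z x : Fin n → ℝ} (hz : z ∈ Sset A b) (hle : ∀ k, z k ≤ x k) (j : Fin n) :
    z j ∈ Fset A b j x := by
  refine ⟨hz.1 j, fun i => ?_⟩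
  calc b i ≤ ∑ k, TL (A i k) (z k) := hz.2 i
    _ = TL (A i j) (z j) + ∑ k ∈ Finset.univ.erase j, TL (A i k) (z k) := sum_split _ j
    _ ≤ TL (A i j) (z j) + ∑ k ∈ Finset.univ.erase j, TL (A i k) (x k) := by
        exact add_le_add le_rfl (Finset.sum_le_sum fun k _ => TL_mono _ (hle k))

lemma Fset_bddBelow {m n : ℕ} (A : Fin m → Fin n → ℝ) (b : Fin m → ℝ)
    (j : Fin n) (x : Fin n → ℝ) : BddBelow (Fset A b j x) :=
  ⟨0, fun _ ht => ht.1.1⟩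

lemma Fset_closed {m n : ℕ} (A : Fin m → Fin n → ℝ) (b : Fin m → ℝ)
    (j : Fin n) (x : Fin n → ℝ) : IsClosed (Fset A b j x) := by
  have h1 : Fset A b j x = (Set.Icc (0:ℝ) 1) ∩
      ⋂ i, {t : ℝ | b i ≤ TL (A i j) t + ∑ k ∈ Finset.univ.erase j, TL (A i k) (x k)} := by
    ext t
    simp only [Fset, Set.mem_setOf_eq, Set.mem_inter_iff, Set.mem_iInter]
  rw [h1]
  refine isClosed_Icc.inter (isClosed_iInter fun i => ?_)
  have hc : Continuous fun t : ℝ =>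
      TL (A i j) t + ∑ k ∈ Finset.univ.erase j, TL (A i k) (x k) := by
    unfold TL
    exact (((continuous_const.add continuous_id).sub continuous_const).max
      continuous_const).add continuous_const
  exact isClosed_le continuous_const hc

lemma sInf_mem_Fset {m n : ℕ} {A : Fin m → Fin n → ℝ} {b : Fin m → ℝ}
    {j : Fin n} {x : Fin n → ℝ} (hne : (Fset A b j x).Nonempty) :
    sInf (Fset A b j x) ∈ Fset A b j x :=
  (Fset_closed A b j x).csInf_mem hne (Fset_bddBelow A b j x)

/-- One-pass coordinate reduction. -/
def red {m n : ℕ} (A : Fin m → Fin n → ℝ) (b : Fin m → ℝ) (y : Fin n → ℝ) : ℕ → Fin n → ℝ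
  | 0 => y
  | k+1 =>
    if h : k < n then
      Function.update (red A b y k) ⟨k, h⟩ (sInf (Fset A b ⟨k, h⟩ (red A b y k)))
    else red A b y k

lemma red_mem {m n : ℕ} {A : Fin m → Fin n → ℝ} {b : Fin m → ℝ} {y : Fin n → ℝ}
    (hy : y ∈ Sset A b) : ∀ k, red A b y k ∈ Sset A b := by
  intro k
  induction k with
  | zero => exact hy
  | succ k ih =>
    show red A b y (k+1) ∈ Sset A b
    rw [red]
    split
    · exact update_mem_Sset ih.1 (sInf_mem_Fset ⟨_, mem_Fset_of ih (fun _ => le_rfl) _⟩)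
    · exact ih

lemma red_succ_le {m n : ℕ} {A : Fin m → Fin n → ℝ} {b : Fin m → ℝ} {y : Fin n → ℝ}
    (hy : y ∈ Sset A b) (k : ℕ) : ∀ j, red A b y (k+1) j ≤ red A b y k j := by
  intro j
  rw [red]
  split
  · rename_i h
    by_cases hj : j = ⟨k, h⟩
    · subst hj
      rw [Function.update_self]
      exact csInf_le (Fset_bddBelow _ _ _ _)
        (mem_Fset_of (red_mem hy k) (fun _ => le_rfl) _)
    · rw [Function.update_of_ne hj]
  · exact le_rfl

lemma red_le {m n : ℕ} {A : Fin m → Fin n → ℝ} {b : Fin m → ℝ} {y : Fin n → ℝ}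
    (hy : y ∈ Sset A b) {k l : ℕ} (h : k ≤ l) : ∀ j, red A b y l j ≤ red A b y k j := by
  induction l with
  | zero =>
    intro j
    have hk : k = 0 := Nat.le_zero.mp h
    subst hk; exact le_rfl
  | succ l ih =>
    intro j
    rcases Nat.lt_or_ge k (l+1) with h' | h'
    · exact le_trans (red_succ_le hy l j) (ih (by omega) j)
    · have : k = l + 1 := by omega
      subst this; exact le_rfl

lemma red_coord {m n : ℕ} {A : Fin m → Fin n → ℝ} {b : Fin m → ℝ} {y : Fin n → ℝ}
    (j : Fin n) : ∀ l, j.val < l → red A b y l j = sInf (Fset A b j (red A b y j.val)) := by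
  intro l
  induction l with
  | zero => omega
  | succ l ih =>
    intro hl
    rcases Nat.lt_or_ge j.val l with h' | h'
    · rw [red]
      split
      · rename_i h
        rw [Function.update_of_ne (Fin.ne_of_val_ne (Nat.ne_of_lt h' : j.val ≠ l))]
        exact ih h'
      · exact ih h'
    · have hjl : j.val = l := by omega
      subst hjl
      rw [red, dif_pos j.isLt]
      have : (⟨j.val, j.isLt⟩ : Fin n) = j := Fin.eta j j.isLt
      rw [this, Function.update_self]

lemma red_minimal {m n : ℕ} {A : Fin m → Fin n → ℝ} {b : Fin m → ℝ} {y : Fin n → ℝ}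
    (hy : y ∈ Sset A b) : IsMinimalSol A b (red A b y n) := by
  refine ⟨red_mem hy n, fun z hz hle => ?_⟩
  funext j
  have h1 : red A b y n j = sInf (Fset A b j (red A b y j.val)) := red_coord j n j.isLt
  have h2 : z j ∈ Fset A b j (red A b y j.val) := by
    refine mem_Fset_of hz (fun k => ?_) j
    exact le_trans (hle k) (red_le hy (Nat.le_of_lt j.isLt) k)
  have h3 : red A b y n j ≤ z j := by
    rw [h1]; exact csInf_le (Fset_bddBelow _ _ _ _) h2
  exact le_antisymm (hle j) h3

lemma delta_le {m n : ℕ} {A : Fin m → Fin n → ℝ} {b : Fin m → ℝ}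
    {x : Fin n → ℝ} (hx : x ∈ Sset A b) (j : Fin n) :
    sInf (Fset A b j (fun _ => (1:ℝ))) ≤ x j :=
  csInf_le (Fset_bddBelow _ _ _ _) (mem_Fset_of hx (fun k => (hx.1 k).2) j)

theorem stmt10 {m n : ℕ} (A : Fin m → Fin n → ℝ) (b : Fin m → ℝ)
    (hA : ∀ i j, A i j ∈ Set.Icc (0:ℝ) 1) (hb : ∀ i, 0 < b i)
    (hS : (Sset A b).Nonempty) :
    ((∃! x, IsMinimalSol A b x) ↔
        (fun j => sInf (Fset A b j (fun _ => (1:ℝ)))) ∈ Sset A b) ∧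
      ((fun j => sInf (Fset A b j (fun _ => (1:ℝ)))) ∈ Sset A b →
        IsMinimalSol A b (fun j => sInf (Fset A b j (fun _ => (1:ℝ)))) ∧
          ∀ y, IsMinimalSol A b y → y = fun j => sInf (Fset A b j (fun _ => (1:ℝ)))) := by
  set δ : Fin n → ℝ := fun j => sInf (Fset A b j (fun _ => (1:ℝ))) with hδ
  obtain ⟨x₀, hx₀⟩ := hS
  -- δ j ∈ Fset A b j 1̂
  have hδF : ∀ j, δ j ∈ Fset A b j (fun _ => (1:ℝ)) := fun j =>
    sInf_mem_Fset ⟨_, mem_Fset_of hx₀ (fun k => (hx₀.1 k).2) j⟩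
  have key : (∃! x, IsMinimalSol A b x) → δ ∈ Sset A b := by
    rintro ⟨x, hx, hu⟩
    have hxeq : x = δ := by
      funext j
      -- y^{(j)} = 1̂ with coordinate j set to δ j is in S
      have hyj : Function.update (fun _ => (1:ℝ)) j (δ j) ∈ Sset A b :=
        update_mem_Sset (fun _ => ⟨zero_le_one, le_rfl⟩) (hδF j)
      have hmin := red_minimal hyj
      have hrx : red A b (Function.update (fun _ => (1:ℝ)) j (δ j)) n = x := hu _ hmin
      have h1 : x j ≤ δ j := by
        rw [← hrx]
        have := red_le hyj (Nat.zero_le n) j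
        simpa [red, Function.update_self] using this
      have h2 : δ j ≤ x j := delta_le hx.1 j
      linarith
    rw [← hxeq]; exact hx.1
  have back : δ ∈ Sset A b → IsMinimalSol A b δ ∧ ∀ y, IsMinimalSol A b y → y = δ := by
    intro hδS
    have hminδ : IsMinimalSol A b δ := by
      refine ⟨hδS, fun z hz hle => ?_⟩
      funext j
      exact le_antisymm (hle j) (delta_le hz j)
    refine ⟨hminδ, fun y hy => ?_⟩
    exact (hy.2 δ hδS (fun j => delta_le hy.1 j)).symm
  constructor
  · constructor
    · exact key
    · intro hδS
      exact ⟨δ, (back hδS).1, fun y hy => (back hδS).2 y hy⟩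
  · exact back
end
end

section
/- If x ∈ S(A,b) and y is obtained from x by replacing the j-th coordinate by δ_j(x) (keeping all other coordinates), then y ∈ S(A,b) and y ≤ x. -/
open Finset

noncomputable section

theorem stmt12 {m n : ℕ} (A : Fin m → Fin n → ℝ) (b : Fin m → ℝ)
    (hA : ∀ i j, A i j ∈ Set.Icc (0:ℝ) 1) (hb : ∀ i, 0 < b i)
    (x : Fin n → ℝ) (hx : x ∈ Sset A b) (j : Fin n) :
    Function.update x j (sInf (Fset A b j x)) ∈ Sset A b ∧
      Function.update x j (sInf (Fset A b j x)) ≤ x := by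
  obtain ⟨hIcc, hsum⟩ := hx
  have hmem : x j ∈ Fset A b j x := by
    refine ⟨hIcc j, fun i => ?_⟩
    calc b i ≤ ∑ k, TL (A i k) (x k) := hsum i
    _ = TL (A i j) (x j) + ∑ k ∈ Finset.univ.erase j, TL (A i k) (x k) := by
        rw [← Finset.add_sum_erase _ _ (Finset.mem_univ j)]
  have hbdd : BddBelow (Fset A b j x) := ⟨0, fun t ht => ht.1.1⟩
  have hne : (Fset A b j x).Nonempty := ⟨x j, hmem⟩
  have hclosed : IsClosed (Fset A b j x) := by
    have : Fset A b j x = Set.Icc (0:ℝ) 1 ∩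
        ⋂ i, {t | b i ≤ TL (A i j) t + ∑ k ∈ Finset.univ.erase j, TL (A i k) (x k)} := by
      ext t
      simp [Fset, Set.mem_iInter]
    rw [this]
    refine isClosed_Icc.inter (isClosed_iInter fun i => ?_)
    have hcont : Continuous fun t : ℝ =>
        TL (A i j) t + ∑ k ∈ Finset.univ.erase j, TL (A i k) (x k) := by
      unfold TL
      fun_prop
    exact isClosed_le continuous_const hcont
  have hinf : sInf (Fset A b j x) ∈ Fset A b j x := hclosed.csInf_mem hne hbdd
  have hle : sInf (Fset A b j x) ≤ x j := csInf_le hbdd hmem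
  refine ⟨⟨fun k => ?_, fun i => ?_⟩, fun k => ?_⟩
  · rcases eq_or_ne k j with rfl | hk
    · simpa using hinf.1
    · rw [Function.update_of_ne hk]; exact hIcc k
  · calc b i ≤ TL (A i j) (sInf (Fset A b j x)) +
        ∑ k ∈ Finset.univ.erase j, TL (A i k) (x k) := hinf.2 i
    _ = ∑ k, TL (A i k) (Function.update x j (sInf (Fset A b j x)) k) := by
        rw [← Finset.add_sum_erase _ (fun k => TL (A i k)
          (Function.update x j (sInf (Fset A b j x)) k)) (Finset.mem_univ j)]
        rw [Function.update_self]
        congr 1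
        exact Finset.sum_congr rfl fun k hk =>
          by rw [Function.update_of_ne (Finset.mem_erase.mp hk).1]
  · rcases eq_or_ne k j with rfl | hk
    · simpa using hle
    · rw [Function.update_of_ne hk]
end
end

section
/- For every x ∈ S(A,b) there exists a minimal solution x* of the system with x* ≤ x componentwise. -/
open Finset

noncomputable section

lemma continuous_TL (a : ℝ) : Continuous (fun t : ℝ => TL a t) := by
  unfold TL
  exact (((continuous_const.add continuous_id).sub continuous_const).max continuous_const)

lemma isClosed_Sset {m n : ℕ} (A : Fin m → Fin n → ℝ) (b : Fin m → ℝ) :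
    IsClosed (Sset A b) := by
  have h1 : Sset A b =
      (⋂ j, {y : Fin n → ℝ | y j ∈ Set.Icc (0:ℝ) 1}) ∩
      (⋂ i, {y : Fin n → ℝ | b i ≤ ∑ j, TL (A i j) (y j)}) := by
    ext y; simp [Sset, Set.mem_iInter]
  rw [h1]
  apply IsClosed.inter
  · exact isClosed_iInter fun j =>
      IsClosed.preimage (continuous_apply j) isClosed_Icc
  · refine isClosed_iInter fun i => ?_
    have hc : Continuous (fun y : Fin n → ℝ => ∑ j, TL (A i j) (y j)) :=
      continuous_finset_sum _ fun j _ => (continuous_TL (A i j)).comp (continuous_apply j)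
    exact isClosed_le continuous_const hc

theorem stmt13 {m n : ℕ} (A : Fin m → Fin n → ℝ) (b : Fin m → ℝ)
    (hA : ∀ i j, A i j ∈ Set.Icc (0:ℝ) 1) (hb : ∀ i, 0 < b i)
    (x : Fin n → ℝ) (hx : x ∈ Sset A b) :
    ∃ xs, IsMinimalSol A b xs ∧ xs ≤ x := by
  set T : Set (Fin n → ℝ) := Sset A b ∩ {y | y ≤ x} with hT
  have hTclosed : IsClosed T :=
    (isClosed_Sset A b).inter (isClosed_le continuous_id continuous_const)
  have hTsub : T ⊆ Set.univ.pi (fun _ : Fin n => Set.Icc (0:ℝ) 1) := by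
    intro y hy
    intro j _
    exact hy.1.1 j
  have hTcompact : IsCompact T :=
    IsCompact.of_isClosed_subset (isCompact_univ_pi fun _ => isCompact_Icc) hTclosed hTsub
  have hTne : T.Nonempty := ⟨x, hx, le_refl x⟩
  have hfc : ContinuousOn (fun y : Fin n → ℝ => ∑ j, y j) T :=
    (continuous_finset_sum _ fun j _ => continuous_apply j).continuousOn
  obtain ⟨xs, hxsT, hmin⟩ := hTcompact.exists_isMinOn hTne hfc
  refine ⟨xs, ⟨hxsT.1, ?_⟩, hxsT.2⟩
  intro y hy hyle
  have hyT : y ∈ T := ⟨hy, le_trans hyle hxsT.2⟩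
  have hsum : ∑ j, xs j ≤ ∑ j, y j := hmin hyT
  by_contra hne
  have : ∃ j, y j < xs j := by
    by_contra h
    push_neg at h
    exact hne (funext fun j => le_antisymm (hyle j) (h j))
  obtain ⟨j, hj⟩ := this
  have : ∑ j, y j < ∑ j, xs j :=
    Finset.sum_lt_sum (fun k _ => hyle k) ⟨j, Finset.mem_univ j, hj⟩
  linarith
end
end

section
/- S(A,b) equals the union over all minimal solutions x̌ of the order intervals {x ∈ [0,1]^n : x̌ ≤ x ≤ (1,...,1)}. -/
open Finset

noncomputable section

theorem stmt14 {m n : ℕ} (A : Fin m → Fin n → ℝ) (b : Fin m → ℝ)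
    (hA : ∀ i j, A i j ∈ Set.Icc (0:ℝ) 1) (hb : ∀ i, 0 < b i) :
    Sset A b = ⋃ c ∈ {c | IsMinimalSol A b c}, Set.Icc c (fun _ : Fin n => (1:ℝ)) := by
  have hTLmono : ∀ (a : ℝ) {u v : ℝ}, u ≤ v → TL a u ≤ TL a v := by
    intro a u v h
    exact max_le_max (by linarith) le_rfl
  have hclosed : IsClosed (Sset A b) := by
    have h1 : Sset A b =
        (⋂ j, (fun x : Fin n → ℝ => x j) ⁻¹' Set.Icc (0:ℝ) 1) ∩
        (⋂ i, {x : Fin n → ℝ | b i ≤ ∑ j, TL (A i j) (x j)}) := by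
      ext x
      simp [Sset, Set.mem_iInter]
    rw [h1]
    apply IsClosed.inter
    · exact isClosed_iInter fun j => isClosed_Icc.preimage (continuous_apply j)
    · refine isClosed_iInter fun i => ?_
      have hc : Continuous fun x : Fin n → ℝ => ∑ j, TL (A i j) (x j) := by
        apply continuous_finset_sum
        intro j _
        exact (continuous_const.add (continuous_apply j) |>.sub continuous_const).max
          continuous_const
      exact isClosed_le continuous_const hc
  ext x
  simp only [Set.mem_iUnion, Set.mem_setOf_eq, exists_prop]
  constructor
  · intro hx
    -- find a minimal solution below x
    set T : Set (Fin n → ℝ) := Sset A b ∩ Set.Icc (fun _ => (0:ℝ)) x with hT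
    have hTcomp : IsCompact T := isCompact_Icc.inter_left hclosed
    have hxT : x ∈ T := by
      refine ⟨hx, ?_, le_rfl⟩
      intro j
      exact (hx.1 j).1
    have hcont : Continuous fun y : Fin n → ℝ => ∑ j, y j :=
      continuous_finset_sum _ fun j _ => continuous_apply j
    obtain ⟨z, hzT, hzmin⟩ := hTcomp.exists_isMinOn ⟨x, hxT⟩ hcont.continuousOn
    refine ⟨z, ⟨hzT.1, ?_⟩, ?_, ?_⟩
    · intro y hy hyz
      have hyT : y ∈ T := by
        refine ⟨hy, fun j => (hy.1 j).1, le_trans hyz hzT.2.2⟩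
      have hle : ∑ j, z j ≤ ∑ j, y j := hzmin hyT
      have hge : ∀ j ∈ Finset.univ, y j ≤ z j := fun j _ => hyz j
      have heq : ∑ j, y j = ∑ j, z j :=
        le_antisymm (Finset.sum_le_sum hge) hle
      funext j
      exact (Finset.sum_eq_sum_iff_of_le hge).1 heq j (Finset.mem_univ j)
    · exact hzT.2.2
    · intro j
      exact (hx.1 j).2
  · rintro ⟨c, hc, hcx, hx1⟩
    constructor
    · intro j
      exact ⟨le_trans (hc.1.1 j).1 (hcx j), hx1 j⟩
    · intro i
      calc b i ≤ ∑ j, TL (A i j) (c j) := hc.1.2 i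
        _ ≤ ∑ j, TL (A i j) (x j) :=
          Finset.sum_le_sum fun j _ => hTLmono _ (hcx j)
end
end

section
/- If S(A,b) ≠ ∅, then there exists a minimal solution x of the system that is an optimal solution of the minimax problem: minimize Z(x) = max_j x_j over x ∈ S(A,b). -/
open Finset

noncomputable section

lemma isCompact_Sset {m n : ℕ} (A : Fin m → Fin n → ℝ) (b : Fin m → ℝ) :
    IsCompact (Sset A b) := by
  refine (isCompact_Icc (a := (0 : Fin n → ℝ)) (b := 1)).of_isClosed_subset
    (isClosed_Sset A b) ?_
  intro x hx
  exact ⟨fun j => (hx.1 j).1, fun j => (hx.1 j).2⟩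

lemma continuous_Zf {n : ℕ} (hn : 0 < n) : Continuous (Zf (n := n)) := by
  haveI : Nonempty (Fin n) := ⟨⟨0, hn⟩⟩
  have : Zf (n := n) = fun x => Finset.univ.sup' univ_nonempty (fun j => x j) := by
    funext x
    rw [Finset.sup'_univ_eq_ciSup]
    rfl
  rw [this]
  exact Continuous.finset_sup'_apply univ_nonempty fun i _ => continuous_apply i

lemma Zf_mono {n : ℕ} (hn : 0 < n) {x y : Fin n → ℝ} (h : x ≤ y) : Zf x ≤ Zf y := by
  haveI : Nonempty (Fin n) := ⟨⟨0, hn⟩⟩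
  exact ciSup_mono (Set.Finite.bddAbove (Set.finite_range y)) h

theorem stmt16 {m n : ℕ} (hn : 0 < n) (A : Fin m → Fin n → ℝ) (b : Fin m → ℝ)
    (hA : ∀ i j, A i j ∈ Set.Icc (0:ℝ) 1) (hb : ∀ i, 0 < b i)
    (hS : (Sset A b).Nonempty) :
    ∃ x, IsMinimalSol A b x ∧ IsOptimal A b x := by
  obtain ⟨x0, hx0S, hx0min⟩ := (isCompact_Sset A b).exists_isMinOn hS
    ((continuous_Zf hn).continuousOn)
  set K : Set (Fin n → ℝ) := Sset A b ∩ Set.Iic x0 with hK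
  have hKc : IsCompact K := (isCompact_Sset A b).inter_right isClosed_Iic
  have hKne : K.Nonempty := ⟨x0, hx0S, le_refl x0⟩
  have hfc : Continuous fun x : Fin n → ℝ => ∑ j, x j :=
    continuous_finset_sum _ fun j _ => continuous_apply j
  obtain ⟨xs, hxsK, hxsmin⟩ := hKc.exists_isMinOn hKne hfc.continuousOn
  refine ⟨xs, ⟨hxsK.1, ?_⟩, hxsK.1, ?_⟩
  · intro y hyS hyle
    by_contra hne
    have hyK : y ∈ K := ⟨hyS, le_trans hyle hxsK.2⟩
    have hlt : ∑ j, y j < ∑ j, xs j := by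
      obtain ⟨j, hj⟩ := Function.ne_iff.mp hne
      exact Finset.sum_lt_sum (fun k _ => hyle k) ⟨j, mem_univ j, lt_of_le_of_ne (hyle j) hj⟩
    exact absurd (hxsmin hyK) (not_le.mpr hlt)
  · intro y hyS
    exact le_trans (Zf_mono hn hxsK.2) (hx0min hyS)
end
end

section
/- Let x be an optimal solution of the minimax problem (minimize Z(x) = max_j x_j over S(A,b)). Then x is the greatest optimal solution (i.e., every other optimal solution is ≤ x componentwise) if and only if x_1 = x_2 = ... = x_n = Z(x). Moreover, the set of optimal solutions always has a greatest element when S(A,b) ≠ ∅. -/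
open Finset

noncomputable section

theorem stmt17 {m n : ℕ} (hn : 0 < n) (A : Fin m → Fin n → ℝ) (b : Fin m → ℝ)
    (hA : ∀ i j, A i j ∈ Set.Icc (0:ℝ) 1) (hb : ∀ i, 0 < b i)
    (hS : (Sset A b).Nonempty) :
    (∀ x, IsOptimal A b x →
      ((∀ y, IsOptimal A b y → y ≤ x) ↔ ∀ j, x j = Zf x)) ∧
    (∃ x, IsOptimal A b x ∧ ∀ y, IsOptimal A b y → y ≤ x) := by
  haveI : Nonempty (Fin n) := ⟨⟨0, hn⟩⟩
  have hbdd : ∀ (x : Fin n → ℝ) (j : Fin n), x j ≤ Zf x := fun x j =>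
    le_ciSup (Set.Finite.bddAbove (Set.finite_range x)) j
  have hZconst : ∀ c : ℝ, Zf (fun _ : Fin n => c) = c := fun c => ciSup_const
  have hZle : ∀ (x : Fin n → ℝ) (c : ℝ), (∀ j, x j ≤ c) → Zf x ≤ c := fun x c h => ciSup_le h
  have hTLmono : ∀ (a : ℝ) {u v : ℝ}, u ≤ v → TL a u ≤ TL a v := by
    intro a u v h
    exact max_le_max (by linarith) le_rfl
  set C : Set ℝ := Set.Icc 0 1 ∩ ⋂ i, {t | b i ≤ ∑ j, TL (A i j) t} with hC
  have hmemC : ∀ x ∈ Sset A b, Zf x ∈ C := by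
    intro x hx
    obtain ⟨hx1, hx2⟩ := hx
    refine ⟨⟨le_trans (hx1 ⟨0, hn⟩).1 (hbdd x _), hZle x 1 fun j => (hx1 j).2⟩, ?_⟩
    refine Set.mem_iInter.2 fun i => ?_
    exact le_trans (hx2 i) (Finset.sum_le_sum fun j _ => hTLmono _ (hbdd x j))
  have hconstS : ∀ t ∈ C, (fun _ : Fin n => t) ∈ Sset A b := fun t ht =>
    ⟨fun _ => ht.1, fun i => Set.mem_iInter.1 ht.2 i⟩
  obtain ⟨x0, hx0⟩ := hS
  have hCne : C.Nonempty := ⟨_, hmemC x0 hx0⟩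
  have hCbdd : BddBelow C := ⟨0, fun t ht => ht.1.1⟩
  have hCclosed : IsClosed C := by
    refine isClosed_Icc.inter (isClosed_iInter fun i => isClosed_le continuous_const ?_)
    exact continuous_finset_sum _ fun j _ =>
      ((continuous_const.add continuous_id).sub continuous_const).max continuous_const
  have htC : sInf C ∈ C := hCclosed.csInf_mem hCne hCbdd
  set t : ℝ := sInf C with ht
  have hxt : (fun _ : Fin n => t) ∈ Sset A b := hconstS t htC
  have hoptt : IsOptimal A b (fun _ => t) := by
    refine ⟨hxt, fun y hy => ?_⟩
    rw [hZconst]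
    exact csInf_le hCbdd (hmemC y hy)
  have hZopt : ∀ y, IsOptimal A b y → Zf y = t := by
    intro y hy
    have h1 := hy.2 _ hxt
    rw [hZconst] at h1
    exact le_antisymm h1 (csInf_le hCbdd (hmemC y hy.1))
  have hgreat : ∀ y, IsOptimal A b y → y ≤ fun _ => t := by
    intro y hy
    rw [Pi.le_def]
    intro j
    have := hbdd y j
    rw [hZopt y hy] at this
    exact this
  refine ⟨?_, ⟨_, hoptt, hgreat⟩⟩
  intro x hx
  constructor
  · intro hgx j
    have h1 : t ≤ x j := hgx _ hoptt j
    have h2 : x j ≤ Zf x := hbdd x j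
    have h3 : Zf x = t := hZopt x hx
    linarith
  · intro hall y hy
    rw [Pi.le_def]
    intro j
    have h1 : Zf y = Zf x := (hZopt y hy).trans (hZopt x hx).symm
    calc y j ≤ Zf y := hbdd y j
      _ = Zf x := h1
      _ = x j := (hall j).symm
end
end

section
/- Fix i with ∑_j a_{ij} ≥ b_i and set u = (b_i − ∑_j a_{ij})/n + 1. Then u ∈ [0,1], the constant vector (u,...,u) satisfies the i-th inequality ∑_j T_L(a_{ij}, u) ≥ b_i, and the set J(u) = {j : u ≥ 1 − a_{ij}} is nonempty. Furthermore, (u,...,u) is the unique optimal solution of the single-constraint minimax problem (minimize y over y ∈ [0,1] with ∑_j T_L(a_{ij}, y) ≥ b_i) if and only if ∑_{j ∈ J(u)} T_L(a_{ij}, u) = b_i. -/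
open Finset

noncomputable section

lemma TL_nonneg (a x : ℝ) : 0 ≤ TL a x := le_max_right _ _

lemma TL_lip (a u ε : ℝ) (hε : 0 ≤ ε) : TL a u - ε ≤ TL a (u - ε) := by
  unfold TL
  have h1 := le_max_left (a + (u - ε) - 1) 0
  have h2 := le_max_right (a + (u - ε) - 1) 0
  have : max (a + u - 1) 0 ≤ max (a + (u - ε) - 1) 0 + ε := by
    apply max_le <;> linarith
  linarith

theorem stmt18 {n : ℕ} (hn : 0 < n) (a : Fin n → ℝ) (b : ℝ)
    (ha : ∀ j, a j ∈ Set.Icc (0:ℝ) 1) (hb : 0 < b)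
    (hfeas : b ≤ ∑ j, a j)
    (u : ℝ) (hu : u = (b - ∑ j, a j) / n + 1) :
    u ∈ Set.Icc (0:ℝ) 1 ∧
      b ≤ ∑ j, TL (a j) u ∧
      {j : Fin n | 1 - a j ≤ u}.Nonempty ∧
      (IsLeast {y ∈ Set.Icc (0:ℝ) 1 | b ≤ ∑ j, TL (a j) y} u ↔
        ∑ j ∈ Finset.univ.filter (fun j => 1 - a j ≤ u), TL (a j) u = b) := by
  have hn' : (0:ℝ) < n := by exact_mod_cast hn
  set S := ∑ j, a j with hS
  have hS_le : S ≤ n := by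
    calc S ≤ ∑ _j : Fin n, (1:ℝ) := Finset.sum_le_sum fun j _ => (ha j).2
    _ = n := by simp
  have hu1 : u ≤ 1 := by
    rw [hu]
    have : (b - S) / n ≤ 0 := div_nonpos_of_nonpos_of_nonneg (by linarith) hn'.le
    linarith
  have hu0 : 0 < u := by
    rw [hu]
    have : (-1 : ℝ) < (b - S) / n := by
      rw [lt_div_iff₀ hn']
      nlinarith
    linarith
  have hmem : u ∈ Set.Icc (0:ℝ) 1 := ⟨hu0.le, hu1⟩
  have hsumlin : ∑ j, (a j + u - 1) = b := by
    have h1 : ∑ j, (a j + u - 1) = ∑ j, a j + ∑ _j : Fin n, (u - 1) := by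
      rw [← Finset.sum_add_distrib]
      exact Finset.sum_congr rfl fun j _ => by ring
    have h2 : ∑ _j : Fin n, (u - 1) = n * (u - 1) := by
      simp [mul_comm]
      ring
    rw [h1, h2, ← hS, hu]
    field_simp
    ring
  have hfeas2 : b ≤ ∑ j, TL (a j) u := by
    rw [← hsumlin]
    exact Finset.sum_le_sum fun j _ => le_max_left _ _
  have hne : {j : Fin n | 1 - a j ≤ u}.Nonempty := by
    by_contra h
    push_neg at h
    simp only [Set.not_nonempty_iff_eq_empty, Set.eq_empty_iff_forall_notMem,
      Set.mem_setOf_eq, not_le] at h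
    have : ∑ j, TL (a j) u = 0 := by
      apply Finset.sum_eq_zero
      intro j _
      have := h j
      unfold TL
      rw [max_eq_right] <;> linarith
    linarith
  have hfilter : ∑ j ∈ Finset.univ.filter (fun j => 1 - a j ≤ u), TL (a j) u
      = ∑ j, TL (a j) u := by
    apply Finset.sum_filter_of_ne
    intro j _ hne
    unfold TL at hne
    by_contra hc
    push_neg at hc
    exact hne (max_eq_right (by linarith))
  refine ⟨hmem, hfeas2, hne, ?_⟩
  rw [hfilter]
  constructor
  · intro hleast
    by_contra hgt
    have hT : b < ∑ j, TL (a j) u := lt_of_le_of_ne hfeas2 (Ne.symm hgt)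
    set T := ∑ j, TL (a j) u with hTdef
    set ε := min u ((T - b) / n) with hε
    have hε0 : 0 < ε := lt_min hu0 (div_pos (by linarith) hn')
    have hεu : ε ≤ u := min_le_left _ _
    have hεT : n * ε ≤ T - b := by
      have := min_le_right u ((T - b) / n)
      calc n * ε ≤ n * ((T - b) / n) := by nlinarith
      _ = T - b := by field_simp
    have hy : u - ε ∈ {y ∈ Set.Icc (0:ℝ) 1 | b ≤ ∑ j, TL (a j) y} := by
      refine ⟨⟨by linarith, by linarith⟩, ?_⟩
      have : ∑ j, (TL (a j) u - ε) ≤ ∑ j, TL (a j) (u - ε) :=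
        Finset.sum_le_sum fun j _ => TL_lip _ _ _ hε0.le
      rw [Finset.sum_sub_distrib] at this
      simp only [Finset.sum_const, Finset.card_univ, Fintype.card_fin, nsmul_eq_mul] at this
      linarith
    have := hleast.2 hy
    linarith
  · intro hsum
    refine ⟨⟨hmem, hfeas2⟩, ?_⟩
    rintro y ⟨⟨hy0, hy1⟩, hyfeas⟩
    by_contra hlt
    push_neg at hlt
    obtain ⟨j0, _, hj0⟩ : ∃ j ∈ Finset.univ, (0:ℝ) < TL (a j) u := by
      apply Finset.exists_lt_of_sum_lt
      simp [hsum, hb]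
    have hstep : ∑ j, TL (a j) y < ∑ j, TL (a j) u := by
      apply Finset.sum_lt_sum (fun j _ => TL_mono _ hlt.le)
      refine ⟨j0, Finset.mem_univ _, ?_⟩
      have hpos : 0 < a j0 + u - 1 := by
        by_contra hc
        push_neg at hc
        rw [show TL (a j0) u = 0 from max_eq_right (by linarith)] at hj0
        linarith
      unfold TL
      rw [max_eq_left (le_of_lt hpos)]
      apply max_lt <;> linarith
    linarith
end
end

section
/- Suppose S(A,b) ≠ ∅, and for each i let u^{i*} ∈ [0,1] be the minimum of {y ∈ [0,1] : ∑_j T_L(a_{ij}, y) ≥ b_i}. Set u* = max_i u^{i*}. Then the constant vector (u*,...,u*) is the greatest optimal solution of the minimax problem: minimize Z(x) = max_j x_j over x ∈ S(A,b). -/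
open Finset

noncomputable section

theorem stmt19 {m n : ℕ} (hm : 0 < m) (hn : 0 < n)
    (A : Fin m → Fin n → ℝ) (b : Fin m → ℝ)
    (hA : ∀ i j, A i j ∈ Set.Icc (0:ℝ) 1) (hb : ∀ i, 0 < b i)
    (hS : (Sset A b).Nonempty)
    (u : Fin m → ℝ)
    (hu : ∀ i, IsLeast {y ∈ Set.Icc (0:ℝ) 1 | b i ≤ ∑ j, TL (A i j) y} (u i))
    (us : ℝ)
    (hus : us = Finset.univ.sup'
      (Finset.univ_nonempty_iff.mpr (Fin.pos_iff_nonempty.mp hm)) u) :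
    IsOptimal A b (fun _ : Fin n => us) ∧
      ∀ y, IsOptimal A b y → y ≤ fun _ : Fin n => us := by
  haveI : Nonempty (Fin n) := Fin.pos_iff_nonempty.mp hn
  haveI : Nonempty (Fin m) := Fin.pos_iff_nonempty.mp hm
  have hTLmono : ∀ a : ℝ, Monotone (TL a) := fun a x y hxy =>
    max_le_max (by linarith) le_rfl
  have hus01 : us ∈ Set.Icc (0:ℝ) 1 := by
    rw [hus]
    constructor
    · obtain ⟨i⟩ := ‹Nonempty (Fin m)›
      exact le_trans (hu i).1.1.1 (Finset.le_sup' u (Finset.mem_univ i))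
    · exact Finset.sup'_le _ _ (fun i _ => (hu i).1.1.2)
  have husS : (fun _ : Fin n => us) ∈ Sset A b := by
    refine ⟨fun j => hus01, fun i => ?_⟩
    refine le_trans (hu i).1.2 (Finset.sum_le_sum fun j _ => hTLmono _ ?_)
    rw [hus]; exact Finset.le_sup' u (Finset.mem_univ i)
  have hZconst : Zf (fun _ : Fin n => us) = us := ciSup_const
  have hkey : ∀ y ∈ Sset A b, us ≤ Zf y := by
    intro y hy
    have hbdd : BddAbove (Set.range y) := (Set.finite_range y).bddAbove
    have hz0 : ∀ j, y j ≤ Zf y := fun j => le_ciSup hbdd j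
    have hz1 : Zf y ∈ Set.Icc (0:ℝ) 1 := by
      constructor
      · obtain ⟨j⟩ := ‹Nonempty (Fin n)›
        exact le_trans (hy.1 j).1 (hz0 j)
      · exact ciSup_le fun j => (hy.1 j).2
    have hui : ∀ i, u i ≤ Zf y := by
      intro i
      refine (hu i).2 ⟨hz1, ?_⟩
      exact le_trans (hy.2 i) (Finset.sum_le_sum fun j _ => hTLmono _ (hz0 j))
    rw [hus]; exact Finset.sup'_le _ _ fun i _ => hui i
  refine ⟨⟨husS, fun y hy => ?_⟩, fun y hy j => ?_⟩
  · rw [hZconst]; exact hkey y hy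
  · have h1 : Zf y ≤ us := hZconst ▸ hy.2 _ husS
    exact le_trans (le_ciSup ((Set.finite_range y).bddAbove) j) h1
end
end
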